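/- Let H be an n×n Hermitian matrix written in block form with respect to an orthogonal decomposition ℂⁿ = X ⊕ X⊥ as H = [[A, B], [B*, C]], and let μ ∈ ℝ not be an eigenvalue of A. Then the number of eigenvalues of H strictly less than μ equals the number of negative eigenvalues of A − μI plus the number of negative eigenvalues of the Schur complement S_μ = (C − μI) − B*(A − μI)⁻¹B (Haynsworth inertia additivity). -/

import Mathlib

set_option linter.unusedVariables false
set_option linter.unusedSectionVars false
set_option linter.unusedTactic false

open Matrix Module Submodule Finset

namespace Haynsworth

variable {n : Type*} [Fintype n] [DecidableEq n]




noncomputable def q (M : Matrix n n ℂ) (x : n → ℂ) : ℝ := (star x ⬝ᵥ M *ᵥ x).re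

noncomputable def nsq (x : n → ℂ) : ℝ := (star x ⬝ᵥ x).re

def NegOn (μ : ℝ) (M : Matrix n n ℂ) (W : Submodule ℂ (n → ℂ)) : Prop :=
  ∀ x ∈ W, x ≠ 0 → q M x < μ * nsq x

def NonnegOn (μ : ℝ) (M : Matrix n n ℂ) (W : Submodule ℂ (n → ℂ)) : Prop :=
  ∀ x ∈ W, μ * nsq x ≤ q M x

noncomputable def negCnt {M : Matrix n n ℂ} (hM : M.IsHermitian) (μ : ℝ) : ℕ :=
  (Finset.univ.filter fun i => hM.eigenvalues i < μ).card

lemma conj_mul_self (a : ℂ) : (starRingEnd ℂ) a * a = (Complex.normSq a : ℂ) := by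
  rw [mul_comm, Complex.mul_conj]

lemma q_spectral {M : Matrix n n ℂ} (hM : M.IsHermitian) (μ : ℝ) (x : n → ℂ) :
    q M x - μ * nsq x =
      ∑ i, (hM.eigenvalues i - μ) *
        Complex.normSq ((star (hM.eigenvectorUnitary : Matrix n n ℂ) *ᵥ x) i) := by
  set U : Matrix n n ℂ := (hM.eigenvectorUnitary : Matrix n n ℂ) with hUdef
  set y := star U *ᵥ x with hy
  have hsy : star y = star x ᵥ* U := by
    rw [hy, star_mulVec, star_eq_conjTranspose, conjTranspose_conjTranspose]
  have h1 : star x ⬝ᵥ M *ᵥ x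
      = star y ⬝ᵥ (diagonal ((RCLike.ofReal : ℝ → ℂ) ∘ hM.eigenvalues) *ᵥ y) := by
    conv_lhs => rw [hM.spectral_theorem, Unitary.conjStarAlgAut_apply]
    rw [← mulVec_mulVec, ← mulVec_mulVec, dotProduct_mulVec, hsy]
  have h2 : star x ⬝ᵥ x = star y ⬝ᵥ y := by
    rw [hsy, hy, ← dotProduct_mulVec, mulVec_mulVec,
      (Matrix.mem_unitaryGroup_iff).mp hM.eigenvectorUnitary.2, one_mulVec]
  have hdiag : star y ⬝ᵥ (diagonal ((RCLike.ofReal : ℝ → ℂ) ∘ hM.eigenvalues) *ᵥ y)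
      = ∑ i, ((hM.eigenvalues i : ℂ) * (Complex.normSq (y i) : ℂ)) := by
    simp only [dotProduct, mulVec_diagonal, Function.comp_apply, Pi.star_apply]
    refine Finset.sum_congr rfl fun i _ => ?_
    rw [Complex.star_def, mul_left_comm, conj_mul_self]
    rfl
  have hself : star y ⬝ᵥ y = ∑ i, (Complex.normSq (y i) : ℂ) := by
    simp only [dotProduct, Pi.star_apply, Complex.star_def]
    exact Finset.sum_congr rfl fun i _ => conj_mul_self _
  unfold q nsq
  rw [h1, h2, hdiag, hself, Complex.re_sum, Complex.re_sum]
  push_cast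
  rw [Finset.mul_sum, ← Finset.sum_sub_distrib]
  refine Finset.sum_congr rfl fun i _ => ?_
  simp [Complex.ofReal_mul]
  ring

lemma x_eq_U_mulVec {M : Matrix n n ℂ} (hM : M.IsHermitian) (x : n → ℂ) :
    x = (hM.eigenvectorUnitary : Matrix n n ℂ) *ᵥ
      (star (hM.eigenvectorUnitary : Matrix n n ℂ) *ᵥ x) := by
  rw [mulVec_mulVec, (Matrix.mem_unitaryGroup_iff).mp hM.eigenvectorUnitary.2, one_mulVec]






/-- span of the columns of `U` indexed by `T` -/
lemma exists_coord_subspace (U : Matrix n n ℂ) (hU : star U * U = 1)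
    (T : Finset n) :
    ∃ W : Submodule ℂ (n → ℂ), finrank ℂ W = T.card ∧
      ∀ x ∈ W, (∀ j ∉ T, (star U *ᵥ x) j = 0) ∧
        (x ≠ 0 → ∃ j ∈ T, (star U *ᵥ x) j ≠ 0) := by
  classical
  have hUinj : Function.Injective U.mulVecLin := by
    intro a b hab
    have : star U *ᵥ (U *ᵥ a) = star U *ᵥ (U *ᵥ b) := by
      simpa [mulVecLin_apply] using congrArg (star U *ᵥ ·) hab
    simpa [mulVec_mulVec, hU, one_mulVec] using this
  have li0 : LinearIndependent ℂ (fun i : T => (Pi.single (i : n) 1 : n → ℂ)) := by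
    have := (Pi.basisFun ℂ n).linearIndependent.comp
      (Subtype.val : T → n) Subtype.val_injective
    simpa [Function.comp_def] using this
  have li : LinearIndependent ℂ (fun i : T => U *ᵥ Pi.single (i : n) 1) := by
    have := li0.map' U.mulVecLin (LinearMap.ker_eq_bot.mpr hUinj)
    simpa [Function.comp_def, mulVecLin_apply] using this
  refine ⟨span ℂ (Set.range fun i : T => U *ᵥ Pi.single (i : n) 1), ?_, ?_⟩
  · rw [finrank_span_eq_card li, Fintype.card_coe]
  · intro x hx
    rw [mem_span_range_iff_exists_fun] at hx
    obtain ⟨c, hc⟩ := hx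
    set y₀ : n → ℂ := ∑ i : T, c i • (Pi.single (i : n) 1 : n → ℂ) with hy₀
    have hxy : x = U *ᵥ y₀ := by
      rw [← hc, hy₀]
      rw [show (U *ᵥ ∑ i : T, c i • (Pi.single (i:n) 1 : n → ℂ)) = U.mulVecLin (∑ i : T, c i • (Pi.single (i:n) 1 : n → ℂ)) from rfl]
      rw [map_sum]
      simp [mulVecLin_apply, mulVec_smul]
    have hyx : star U *ᵥ x = y₀ := by
      rw [hxy, mulVec_mulVec, hU, one_mulVec]
    have hsupp : ∀ j ∉ T, y₀ j = 0 := by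
      intro j hj
      rw [hy₀]
      rw [Finset.sum_apply]
      refine Finset.sum_eq_zero fun i _ => ?_
      have : (i : n) ≠ j := fun h => hj (h ▸ i.2)
      simp [Pi.single_apply, this]
    refine ⟨fun j hj => by rw [hyx]; exact hsupp j hj, fun hx0 => ?_⟩
    have hy0 : y₀ ≠ 0 := by
      intro h
      apply hx0
      rw [hxy, h, mulVec_zero]
    obtain ⟨j, hj⟩ := Function.ne_iff.mp hy0
    refine ⟨j, ?_, by rw [hyx]; exact hj⟩
    by_contra hjT
    exact hj (hsupp j hjT)


lemma star_coe_unitary {M : Matrix n n ℂ} (hM : M.IsHermitian) :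
    star (hM.eigenvectorUnitary : Matrix n n ℂ) * (hM.eigenvectorUnitary : Matrix n n ℂ) = 1 :=
  Matrix.mem_unitaryGroup_iff'.mp hM.eigenvectorUnitary.2

lemma exists_negOn {M : Matrix n n ℂ} (hM : M.IsHermitian) (μ : ℝ) :
    ∃ W : Submodule ℂ (n → ℂ), NegOn μ M W ∧ finrank ℂ W = negCnt hM μ := by
  obtain ⟨W, hrank, hmem⟩ := exists_coord_subspace (hM.eigenvectorUnitary : Matrix n n ℂ)
    (star_coe_unitary hM) (Finset.univ.filter fun i => hM.eigenvalues i < μ)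
  refine ⟨W, ?_, hrank⟩
  intro x hx hx0
  obtain ⟨hout, hin⟩ := hmem x hx
  obtain ⟨j, hjT, hj⟩ := hin hx0
  have key := q_spectral hM μ x
  set y := star (hM.eigenvectorUnitary : Matrix n n ℂ) *ᵥ x with hy
  have hlt : ∑ i, (hM.eigenvalues i - μ) * Complex.normSq (y i) < 0 := by
    have := Finset.sum_lt_sum (s := Finset.univ)
      (f := fun i => (hM.eigenvalues i - μ) * Complex.normSq (y i))
      (g := fun _ => (0 : ℝ)) ?_ ?_
    · simpa using this
    · intro i _
      show (hM.eigenvalues i - μ) * Complex.normSq (y i) ≤ 0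
      by_cases hiT : i ∈ Finset.univ.filter fun i => hM.eigenvalues i < μ
      · have h1 : hM.eigenvalues i - μ < 0 := by
          have := (Finset.mem_filter.mp hiT).2; linarith
        exact mul_nonpos_of_nonpos_of_nonneg h1.le (Complex.normSq_nonneg _)
      · rw [hout i hiT]; simp
    · refine ⟨j, Finset.mem_univ j, ?_⟩
      show (hM.eigenvalues j - μ) * Complex.normSq (y j) < 0
      have h1 : hM.eigenvalues j - μ < 0 := by
        have := (Finset.mem_filter.mp hjT).2; linarith
      have h2 : 0 < Complex.normSq (y j) := by
        have := Complex.normSq_pos.mpr hj; exact this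
      exact mul_neg_of_neg_of_pos h1 h2
  linarith

lemma exists_nonnegOn {M : Matrix n n ℂ} (hM : M.IsHermitian) (μ : ℝ) :
    ∃ W : Submodule ℂ (n → ℂ), NonnegOn μ M W ∧
      finrank ℂ W = Fintype.card n - negCnt hM μ := by
  obtain ⟨W, hrank, hmem⟩ := exists_coord_subspace (hM.eigenvectorUnitary : Matrix n n ℂ)
    (star_coe_unitary hM) (Finset.univ.filter fun i => ¬ hM.eigenvalues i < μ)
  refine ⟨W, ?_, ?_⟩
  · intro x hx
    obtain ⟨hout, -⟩ := hmem x hx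
    have key := q_spectral hM μ x
    set y := star (hM.eigenvectorUnitary : Matrix n n ℂ) *ᵥ x with hy
    have hge : (0 : ℝ) ≤ ∑ i, (hM.eigenvalues i - μ) * Complex.normSq (y i) := by
      refine Finset.sum_nonneg fun i _ => ?_
      by_cases hiT : i ∈ Finset.univ.filter fun i => ¬ hM.eigenvalues i < μ
      · have h1 : 0 ≤ hM.eigenvalues i - μ := by
          have := (Finset.mem_filter.mp hiT).2; push_neg at this; linarith
        exact mul_nonneg h1 (Complex.normSq_nonneg _)
      · rw [hout i hiT]; simp
    linarith
  · rw [hrank, negCnt, Finset.filter_not]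
    rw [Finset.card_sdiff_of_subset (Finset.filter_subset _ _)]
    simp
lemma finrank_add_finrank_le {M : Matrix n n ℂ} {μ : ℝ} {W V : Submodule ℂ (n → ℂ)}
    (hW : NegOn μ M W) (hV : NonnegOn μ M V) :
    finrank ℂ W + finrank ℂ V ≤ Fintype.card n := by
  have hdisj : W ⊓ V = ⊥ := by
    rw [Submodule.eq_bot_iff]
    intro x hx
    by_contra hx0
    exact absurd (hV x hx.2) (not_le.mpr (hW x hx.1 hx0))
  have hsum := Submodule.finrank_sup_add_finrank_inf_eq W V
  rw [hdisj, finrank_bot, add_zero] at hsum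
  rw [← hsum]
  have := Submodule.finrank_le (W ⊔ V)
  simpa [Module.finrank_fintype_fun_eq_card] using this

lemma negCnt_le_card {M : Matrix n n ℂ} (hM : M.IsHermitian) (μ : ℝ) :
    negCnt hM μ ≤ Fintype.card n := by
  rw [negCnt]; exact le_trans (Finset.card_filter_le _ _) (by simp)

lemma negOn_finrank_le {M : Matrix n n ℂ} (hM : M.IsHermitian) (μ : ℝ)
    {W : Submodule ℂ (n → ℂ)} (hW : NegOn μ M W) : finrank ℂ W ≤ negCnt hM μ := by
  obtain ⟨V, hV, hVrank⟩ := exists_nonnegOn hM μ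
  have hle := finrank_add_finrank_le hW hV
  have hcnt := negCnt_le_card hM μ
  omega


section TwoTypes
variable {m : Type*} [Fintype m] [DecidableEq m]

lemma negCnt_le_of {M₁ : Matrix n n ℂ} {M₂ : Matrix m m ℂ} (hM₁ : M₁.IsHermitian)
    (hM₂ : M₂.IsHermitian) (μ₁ μ₂ : ℝ)
    (h : ∀ W, NegOn μ₁ M₁ W → ∃ W', NegOn μ₂ M₂ W' ∧ finrank ℂ W = finrank ℂ W') :
    negCnt hM₁ μ₁ ≤ negCnt hM₂ μ₂ := by
  obtain ⟨W, hW, hrank⟩ := exists_negOn hM₁ μ₁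
  obtain ⟨W', hW', hrank'⟩ := h W hW
  rw [← hrank, hrank']
  exact negOn_finrank_le hM₂ μ₂ hW'
end TwoTypes

/-! ### shift -/

lemma q_sub_smul (M : Matrix n n ℂ) (μ : ℝ) (x : n → ℂ) :
    q (M - (μ : ℂ) • (1 : Matrix n n ℂ)) x = q M x - μ * nsq x := by
  unfold q nsq
  rw [sub_mulVec, dotProduct_sub, smul_mulVec, one_mulVec, dotProduct_smul]
  rw [Complex.sub_re, smul_eq_mul, Complex.re_ofReal_mul]

lemma negOn_shift {M : Matrix n n ℂ} (μ : ℝ) (W : Submodule ℂ (n → ℂ)) :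
    NegOn μ M W ↔ NegOn 0 (M - (μ : ℂ) • (1 : Matrix n n ℂ)) W := by
  constructor <;> intro h x hx hx0 <;> have := h x hx hx0
  · rw [q_sub_smul, zero_mul]; linarith
  · rw [q_sub_smul, zero_mul] at this; linarith

lemma negCnt_shift {M : Matrix n n ℂ} (hM : M.IsHermitian) (μ : ℝ)
    (hMμ : (M - (μ : ℂ) • (1 : Matrix n n ℂ)).IsHermitian) :
    negCnt hM μ = negCnt hMμ 0 := by
  refine le_antisymm ?_ ?_
  · exact negCnt_le_of hM hMμ μ 0 fun W hW => ⟨W, (negOn_shift μ W).mp hW, rfl⟩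
  · exact negCnt_le_of hMμ hM 0 μ fun W hW => ⟨W, (negOn_shift μ W).mpr hW, rfl⟩

/-! ### congruence -/

lemma q_conj (M P : Matrix n n ℂ) (w : n → ℂ) :
    q (Pᴴ * M * P) w = q M (P *ᵥ w) := by
  unfold q
  congr 1
  rw [star_mulVec, dotProduct_mulVec, dotProduct_mulVec, vecMul_vecMul, Matrix.mul_assoc,
    dotProduct_mulVec, vecMul_vecMul, Matrix.mul_assoc]

lemma negOn_congr_map {P M : Matrix n n ℂ} {W : Submodule ℂ (n → ℂ)}
    (h : NegOn 0 (Pᴴ * M * P) W) : NegOn 0 M (W.map P.mulVecLin) := by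
  rintro x hx hx0
  obtain ⟨w, hw, rfl⟩ := Submodule.mem_map.mp hx
  have hw0 : w ≠ 0 := by rintro rfl; exact hx0 (by simp)
  have := h w hw hw0
  rw [q_conj] at this
  rw [zero_mul] at this ⊢
  simpa [mulVecLin_apply] using this

lemma finrank_map_mulVecLin (P Q : Matrix n n ℂ) (hQP : Q * P = 1)
    (W : Submodule ℂ (n → ℂ)) : finrank ℂ (W.map P.mulVecLin) = finrank ℂ W := by
  refine le_antisymm (Submodule.finrank_map_le _ _) ?_
  have : W = (W.map P.mulVecLin).map Q.mulVecLin := by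
    rw [← Submodule.map_comp, ← mulVecLin_mul, hQP, mulVecLin_one, Submodule.map_id]
  conv_lhs => rw [this]
  exact Submodule.finrank_map_le _ _

lemma negCnt_congruence {M M' P Q : Matrix n n ℂ} (hM : M.IsHermitian)
    (hM' : M'.IsHermitian) (hMM' : M' = Pᴴ * M * P) (hQP : Q * P = 1) (hPQ : P * Q = 1) :
    negCnt hM' 0 = negCnt hM 0 := by
  have hback : M = Qᴴ * M' * Q := by
    rw [hMM']
    have : Qᴴ * (Pᴴ * M * P) * Q = (P * Q)ᴴ * M * (P * Q) := by
      rw [conjTranspose_mul]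
      simp only [Matrix.mul_assoc]
    rw [this, hPQ, conjTranspose_one, Matrix.one_mul, Matrix.mul_one]
  refine le_antisymm ?_ ?_
  · refine negCnt_le_of hM' hM 0 0 fun W hW => ?_
    rw [hMM'] at hW
    exact ⟨W.map P.mulVecLin, negOn_congr_map hW, (finrank_map_mulVecLin P Q hQP W).symm⟩
  · refine negCnt_le_of hM hM' 0 0 fun W hW => ?_
    rw [hback] at hW
    exact ⟨W.map Q.mulVecLin, negOn_congr_map hW, (finrank_map_mulVecLin Q P hPQ W).symm⟩




def subProdEquiv {R M N : Type*} [CommRing R] [AddCommGroup M] [AddCommGroup N] [Module R M]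
    [Module R N] (W₁ : Submodule R M) (W₂ : Submodule R N) :
    (W₁.prod W₂) ≃ₗ[R] W₁ × W₂ where
  toFun x := (⟨x.1.1, x.2.1⟩, ⟨x.1.2, x.2.2⟩)
  invFun y := ⟨(y.1.1, y.2.1), ⟨y.1.2, y.2.2⟩⟩
  map_add' _ _ := rfl
  map_smul' _ _ := rfl
  left_inv _ := rfl
  right_inv _ := rfl

variable {m l : Type*} [Fintype m] [DecidableEq m] [Fintype l] [DecidableEq l]

lemma q_fromBlocks (M₁ : Matrix m m ℂ) (M₂ : Matrix l l ℂ) (x : m ⊕ l → ℂ) :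
    q (fromBlocks M₁ 0 0 M₂) x = q M₁ (x ∘ Sum.inl) + q M₂ (x ∘ Sum.inr) := by
  unfold q
  rw [fromBlocks_mulVec, dotProduct_block]
  simp only [zero_mulVec, add_zero, zero_add, Sum.elim_comp_inl, Sum.elim_comp_inr]
  rw [Complex.add_re]
  rfl

lemma nsq_fromBlocks (x : m ⊕ l → ℂ) :
    nsq x = nsq (x ∘ Sum.inl) + nsq (x ∘ Sum.inr) := by
  unfold nsq
  rw [dotProduct_block, Complex.add_re]
  rfl

noncomputable def sumSub (W₁ : Submodule ℂ (m → ℂ)) (W₂ : Submodule ℂ (l → ℂ)) :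
    Submodule ℂ (m ⊕ l → ℂ) :=
  (W₁.prod W₂).comap (LinearEquiv.sumArrowLequivProdArrow m l ℂ ℂ : (m ⊕ l → ℂ) →ₗ[ℂ] _)

lemma mem_sumSub {W₁ : Submodule ℂ (m → ℂ)} {W₂ : Submodule ℂ (l → ℂ)} {x : m ⊕ l → ℂ} :
    x ∈ sumSub W₁ W₂ ↔ x ∘ Sum.inl ∈ W₁ ∧ x ∘ Sum.inr ∈ W₂ := by
  rw [sumSub, Submodule.mem_comap]
  exact Iff.rfl

lemma finrank_sumSub (W₁ : Submodule ℂ (m → ℂ)) (W₂ : Submodule ℂ (l → ℂ)) :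
    finrank ℂ (sumSub W₁ W₂) = finrank ℂ W₁ + finrank ℂ W₂ := by
  rw [sumSub, Submodule.comap_equiv_eq_map_symm]
  rw [LinearEquiv.finrank_map_eq]
  rw [(subProdEquiv W₁ W₂).finrank_eq]
  exact Module.finrank_prod

lemma eq_zero_of_components {x : m ⊕ l → ℂ} (h1 : x ∘ Sum.inl = 0) (h2 : x ∘ Sum.inr = 0) :
    x = 0 := by
  funext i
  cases i with
  | inl a => exact congrFun h1 a
  | inr a => exact congrFun h2 a

lemma q_zero (M : Matrix n n ℂ) : q M 0 = 0 := by simp [q]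

lemma negCnt_fromBlocks {M₁ : Matrix m m ℂ} {M₂ : Matrix l l ℂ}
    (h₁ : M₁.IsHermitian) (h₂ : M₂.IsHermitian)
    (hD : (fromBlocks M₁ 0 0 M₂).IsHermitian) :
    negCnt hD 0 = negCnt h₁ 0 + negCnt h₂ 0 := by
  refine le_antisymm ?_ ?_
  · -- upper: use nonneg subspaces of components
    obtain ⟨V₁, hV₁, hV₁rank⟩ := exists_nonnegOn h₁ 0
    obtain ⟨V₂, hV₂, hV₂rank⟩ := exists_nonnegOn h₂ 0
    obtain ⟨W, hW, hWrank⟩ := exists_negOn hD 0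
    have hVnn : NonnegOn 0 (fromBlocks M₁ 0 0 M₂) (sumSub V₁ V₂) := by
      intro x hx
      obtain ⟨ha, hb⟩ := mem_sumSub.mp hx
      have := hV₁ _ ha
      have := hV₂ _ hb
      rw [q_fromBlocks, zero_mul]
      rw [zero_mul] at *
      linarith
    have hle := finrank_add_finrank_le hW hVnn
    rw [hWrank, finrank_sumSub, hV₁rank, hV₂rank, Fintype.card_sum] at hle
    have c1 := negCnt_le_card h₁ 0
    have c2 := negCnt_le_card h₂ 0
    omega
  · -- lower: neg subspaces of components
    obtain ⟨W₁, hW₁, hW₁rank⟩ := exists_negOn h₁ 0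
    obtain ⟨W₂, hW₂, hW₂rank⟩ := exists_negOn h₂ 0
    have hneg : NegOn 0 (fromBlocks M₁ 0 0 M₂) (sumSub W₁ W₂) := by
      intro x hx hx0
      obtain ⟨ha, hb⟩ := mem_sumSub.mp hx
      rw [q_fromBlocks, zero_mul]
      have hcase : x ∘ Sum.inl ≠ 0 ∨ x ∘ Sum.inr ≠ 0 := by
        by_contra hcon
        push_neg at hcon
        exact hx0 (eq_zero_of_components hcon.1 hcon.2)
      have hq1 : q M₁ (x ∘ Sum.inl) ≤ 0 := by
        rcases eq_or_ne (x ∘ Sum.inl) 0 with h | h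
        · rw [h, q_zero]
        · have := hW₁ _ ha h; rw [zero_mul] at this; linarith
      have hq2 : q M₂ (x ∘ Sum.inr) ≤ 0 := by
        rcases eq_or_ne (x ∘ Sum.inr) 0 with h | h
        · rw [h, q_zero]
        · have := hW₂ _ hb h; rw [zero_mul] at this; linarith
      rcases hcase with h | h
      · have := hW₁ _ ha h; rw [zero_mul] at this; linarith
      · have := hW₂ _ hb h; rw [zero_mul] at this; linarith
    have := negOn_finrank_le hD 0 hneg
    rw [finrank_sumSub, hW₁rank, hW₂rank] at this
    exact this


lemma negCnt_eq_of_eq {M M' : Matrix n n ℂ} (h : M = M') (hM : M.IsHermitian)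
    (hM' : M'.IsHermitian) (μ : ℝ) : negCnt hM μ = negCnt hM' μ := by subst h; rfl

lemma smul_one_isHermitian (μ : ℝ) : (((μ : ℂ)) • (1 : Matrix n n ℂ)).IsHermitian := by
  show _ᴴ = _
  rw [conjTranspose_smul, conjTranspose_one, Complex.star_def, Complex.conj_ofReal]



end Haynsworth

open Haynsworth


theorem haynsworth_inertia (p k : ℕ)
    (A : Matrix (Fin p) (Fin p) ℂ) (B : Matrix (Fin p) (Fin k) ℂ)
    (C : Matrix (Fin k) (Fin k) ℂ) (hA : A.IsHermitian) (hC : C.IsHermitian)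
    (hH : (Matrix.fromBlocks A B Bᴴ C).IsHermitian)
    (μ : ℝ) (hμ : (μ : ℂ) ∉ spectrum ℂ A)
    (hAμ : (A - (μ : ℂ) • (1 : Matrix (Fin p) (Fin p) ℂ)).IsHermitian)
    (hS : ((C - (μ : ℂ) • (1 : Matrix (Fin k) (Fin k) ℂ)) -
        Bᴴ * (A - (μ : ℂ) • (1 : Matrix (Fin p) (Fin p) ℂ))⁻¹ * B).IsHermitian) :
    (Finset.univ.filter fun i => hH.eigenvalues i < μ).card =
      (Finset.univ.filter fun i => hAμ.eigenvalues i < 0).card +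
        (Finset.univ.filter fun i => hS.eigenvalues i < 0).card := by
  set Aμ := A - (μ : ℂ) • (1 : Matrix (Fin p) (Fin p) ℂ) with hAμdef
  set Cμ := C - (μ : ℂ) • (1 : Matrix (Fin k) (Fin k) ℂ) with hCμdef
  set S := Cμ - Bᴴ * Aμ⁻¹ * B with hSdef
  -- invertibility of Aμ
  have hu : IsUnit Aμ := by
    have h1 := spectrum.notMem_iff.mp hμ
    rw [Algebra.algebraMap_eq_smul_one] at h1
    have : Aμ = -((μ : ℂ) • (1 : Matrix (Fin p) (Fin p) ℂ) - A) := by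
      rw [hAμdef, neg_sub]
    rw [this]
    exact h1.neg
  obtain ⟨iAμ⟩ := hu.nonempty_invertible
  have hinvOf : ⅟Aμ = Aμ⁻¹ := Matrix.invOf_eq_nonsing_inv Aμ
  -- Hermitian facts
  have hHμ : ((Matrix.fromBlocks A B Bᴴ C) -
      (μ : ℂ) • (1 : Matrix (Fin p ⊕ Fin k) (Fin p ⊕ Fin k) ℂ)).IsHermitian :=
    hH.sub (smul_one_isHermitian μ)
  have hblocks : (Matrix.fromBlocks A B Bᴴ C) -
      (μ : ℂ) • (1 : Matrix (Fin p ⊕ Fin k) (Fin p ⊕ Fin k) ℂ)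
      = Matrix.fromBlocks Aμ B Bᴴ Cμ := by
    rw [sub_eq_add_neg, ← Matrix.fromBlocks_one, Matrix.fromBlocks_smul,
      Matrix.fromBlocks_neg, Matrix.fromBlocks_add]
    simp [hAμdef, hCμdef, sub_eq_add_neg]
  have hHμ' : (Matrix.fromBlocks Aμ B Bᴴ Cμ).IsHermitian := hblocks ▸ hHμ
  have hD : (Matrix.fromBlocks Aμ 0 0 S).IsHermitian := by
    show _ᴴ = _
    rw [Matrix.fromBlocks_conjTranspose, Matrix.conjTranspose_zero, hAμ.eq, hS.eq, Matrix.conjTranspose_zero]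
  -- LDU decomposition
  set R : Matrix (Fin p ⊕ Fin k) (Fin p ⊕ Fin k) ℂ := Matrix.fromBlocks 1 (Aμ⁻¹ * B) 0 1
    with hRdef
  set Q : Matrix (Fin p ⊕ Fin k) (Fin p ⊕ Fin k) ℂ := Matrix.fromBlocks 1 (-(Aμ⁻¹ * B)) 0 1
    with hQdef
  have hQR : Q * R = 1 := by
    rw [hQdef, hRdef, Matrix.fromBlocks_multiply, ← Matrix.fromBlocks_one]
    congr 1 <;> simp
  have hRQ : R * Q = 1 := by
    rw [hQdef, hRdef, Matrix.fromBlocks_multiply, ← Matrix.fromBlocks_one]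
    congr 1 <;> simp
  have hRH : Rᴴ = Matrix.fromBlocks 1 0 (Bᴴ * Aμ⁻¹) 1 := by
    rw [hRdef, Matrix.fromBlocks_conjTranspose, Matrix.conjTranspose_one,
      Matrix.conjTranspose_zero, Matrix.conjTranspose_mul, hAμ.inv.eq,
      Matrix.conjTranspose_one]
  have hdecomp : Matrix.fromBlocks Aμ B Bᴴ Cμ = Rᴴ * (Matrix.fromBlocks Aμ 0 0 S) * R := by
    have h0 := Matrix.fromBlocks_eq_of_invertible₁₁ Aμ B Bᴴ Cμ
    rw [hinvOf] at h0
    rw [h0, hRH, hRdef, hSdef]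
  calc (Finset.univ.filter fun i => hH.eigenvalues i < μ).card
      = negCnt hH μ := rfl
    _ = negCnt hHμ 0 := negCnt_shift hH μ hHμ
    _ = negCnt hHμ' 0 := negCnt_eq_of_eq hblocks hHμ hHμ' 0
    _ = negCnt hD 0 := negCnt_congruence hD hHμ' hdecomp hQR hRQ
    _ = negCnt hAμ 0 + negCnt hS 0 := negCnt_fromBlocks hAμ hS hD
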